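/- For every equilateral triangle in ℤ³ there exist integers a, b, c, d with d ≥ 1 odd, gcd(a,b,c) = 1 and a² + b² + c² = 3d², such that the vector (a,b,c) is orthogonal to the plane of the triangle, i.e., (a,b,c) is orthogonal to the difference of any two vertices of the triangle. -/

import Mathlib

/-- Dot product of integer vectors in `ℤ³`. -/
def dot3 (u v : Fin 3 → ℤ) : ℤ := ∑ i, u i * v i

/-- Squared Euclidean distance between two points of `ℤ³`. -/
def distSq (u v : Fin 3 → ℤ) : ℤ := dot3 (u - v) (u - v)

/-- An equilateral triangle in `ℤ³`: three points with equal nonzero pairwise distances. -/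
def IsEquilateralTriangle (T : Set (Fin 3 → ℤ)) : Prop :=
  T.ncard = 3 ∧ ∃ s : ℤ, 0 < s ∧ ∀ u ∈ T, ∀ v ∈ T, u ≠ v → distSq u v = s

lemma dot3_vec (a b c : ℤ) (w : Fin 3 → ℤ) :
    dot3 ![a, b, c] w = a * w 0 + b * w 1 + c * w 2 := by
  simp [dot3, Fin.sum_univ_three]

lemma distSq_eq (u v : Fin 3 → ℤ) :
    distSq u v = (u 0 - v 0) * (u 0 - v 0) + (u 1 - v 1) * (u 1 - v 1)
      + (u 2 - v 2) * (u 2 - v 2) := by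
  simp [distSq, dot3, Fin.sum_univ_three]

lemma mod4_lemma : ∀ x y z : ZMod 4, x^2 + y^2 + z^2 = 0 →
    (x = 0 ∨ x = 2) ∧ (y = 0 ∨ y = 2) ∧ (z = 0 ∨ z = 2) := by decide

lemma two_dvd_of_mod4 (a : ℤ) (h : (a : ZMod 4) = 0 ∨ (a : ZMod 4) = 2) : 2 ∣ a := by
  rcases h with h | h
  · have : (4:ℤ) ∣ a := by exact_mod_cast (ZMod.intCast_zmod_eq_zero_iff_dvd a 4).mp h
    omega
  · have h2 : ((a - 2 : ℤ) : ZMod 4) = 0 := by push_cast; rw [h]; ring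
    have : (4:ℤ) ∣ a - 2 := by exact_mod_cast (ZMod.intCast_zmod_eq_zero_iff_dvd _ 4).mp h2
    omega

/-- For every equilateral triangle in `ℤ³` there are integers `a, b, c, d` with `d ≥ 1`
odd, `gcd(a,b,c) = 1` and `a² + b² + c² = 3d²` such that `(a,b,c)` is orthogonal to the
plane of the triangle. -/
theorem equilateralTriangle_normal (T : Set (Fin 3 → ℤ))
    (hT : IsEquilateralTriangle T) :
    ∃ a b c d : ℤ, 1 ≤ d ∧ Odd d ∧ Int.gcd (Int.gcd a b) c = 1 ∧
      a ^ 2 + b ^ 2 + c ^ 2 = 3 * d ^ 2 ∧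
      ∀ u ∈ T, ∀ v ∈ T, dot3 ![a, b, c] (u - v) = 0 := by
  obtain ⟨hcard, s, hs, hdist⟩ := hT
  obtain ⟨P, Q, R, hPQ, hPR, hQR, rfl⟩ := Set.ncard_eq_three.mp hcard
  have hPmem : P ∈ ({P, Q, R} : Set (Fin 3 → ℤ)) := by simp
  have hQmem : Q ∈ ({P, Q, R} : Set (Fin 3 → ℤ)) := by simp
  have hRmem : R ∈ ({P, Q, R} : Set (Fin 3 → ℤ)) := by simp
  have h1 := hdist Q hQmem P hPmem hPQ.symm
  have h2 := hdist R hRmem P hPmem hPR.symm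
  have h3 := hdist Q hQmem R hRmem hQR
  rw [distSq_eq] at h1 h2 h3
  -- abbreviations for the edge vectors
  obtain ⟨u0, u1, u2, v0, v1, v2, hu0, hu1, hu2, hv0, hv1, hv2⟩ :
      ∃ u0 u1 u2 v0 v1 v2 : ℤ, u0 = Q 0 - P 0 ∧ u1 = Q 1 - P 1 ∧ u2 = Q 2 - P 2 ∧
        v0 = R 0 - P 0 ∧ v1 = R 1 - P 1 ∧ v2 = R 2 - P 2 :=
    ⟨_, _, _, _, _, _, rfl, rfl, rfl, rfl, rfl, rfl⟩
  rw [← hu0, ← hu1, ← hu2] at h1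
  rw [← hv0, ← hv1, ← hv2] at h2
  have h3' : (u0 - v0) * (u0 - v0) + (u1 - v1) * (u1 - v1) + (u2 - v2) * (u2 - v2) = s := by
    rw [← h3, hu0, hu1, hu2, hv0, hv1, hv2]; ring
  -- s = 2 t where t = u ⬝ v
  obtain ⟨t, ht⟩ : ∃ t : ℤ, t = u0 * v0 + u1 * v1 + u2 * v2 := ⟨_, rfl⟩
  have hst : s = 2 * t := by rw [ht]; linear_combination h3' - h1 - h2
  have htpos : 0 < t := by linarith
  -- cross product
  obtain ⟨a', b', c', ha', hb', hc'⟩ :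
      ∃ x y z : ℤ, x = u1 * v2 - u2 * v1 ∧ y = u2 * v0 - u0 * v2 ∧ z = u0 * v1 - u1 * v0 :=
    ⟨_, _, _, rfl, rfl, rfl⟩
  have lagrange : a' ^ 2 + b' ^ 2 + c' ^ 2 = 3 * t ^ 2 := by
    rw [ha', hb', hc']
    have : (u1 * v2 - u2 * v1) ^ 2 + (u2 * v0 - u0 * v2) ^ 2 + (u0 * v1 - u1 * v0) ^ 2 =
        (u0 * u0 + u1 * u1 + u2 * u2) * (v0 * v0 + v1 * v1 + v2 * v2)
          - (u0 * v0 + u1 * v1 + u2 * v2) ^ 2 := by ring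
    rw [this, h1, h2, ← ht, hst]; ring
  have orthu' : a' * u0 + b' * u1 + c' * u2 = 0 := by rw [ha', hb', hc']; ring
  have orthv' : a' * v0 + b' * v1 + c' * v2 = 0 := by rw [ha', hb', hc']; ring
  -- gcd normalisation
  set g : ℕ := Int.gcd (Int.gcd a' b') c' with hg
  have hgdvda : (g : ℤ) ∣ a' := dvd_trans (Int.dvd_trans (Int.gcd_dvd_left _ _) (Int.gcd_dvd_left _ _)) dvd_rfl
  have hgdvdb : (g : ℤ) ∣ b' := Int.dvd_trans (Int.gcd_dvd_left _ _) (Int.gcd_dvd_right _ _)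
  have hgdvdc : (g : ℤ) ∣ c' := Int.gcd_dvd_right _ _
  have hgpos : 0 < g := by
    rcases Nat.eq_zero_or_pos g with h0 | h
    · exfalso
      have ha0 : a' = 0 := by
        have := hgdvda; rw [h0] at this; exact_mod_cast (zero_dvd_iff).mp (by exact_mod_cast this)
      have hb0 : b' = 0 := by
        have := hgdvdb; rw [h0] at this; exact_mod_cast (zero_dvd_iff).mp (by exact_mod_cast this)
      have hc0 : c' = 0 := by
        have := hgdvdc; rw [h0] at this; exact_mod_cast (zero_dvd_iff).mp (by exact_mod_cast this)
      rw [ha0, hb0, hc0] at lagrange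
      have hpos : (0:ℤ) < 3 * t ^ 2 := by positivity
      simp at lagrange
      omega
    · exact h
  obtain ⟨a, ha⟩ := hgdvda
  obtain ⟨b, hb⟩ := hgdvdb
  obtain ⟨c, hc⟩ := hgdvdc
  have hgne : (g : ℤ) ≠ 0 := by exact_mod_cast hgpos.ne'
  have hgcd1 : Int.gcd (Int.gcd a b) c = 1 := by
    have hgg : g = g * Int.gcd (Int.gcd a b) c := by
      conv_lhs => rw [hg, ha, hb, hc]
      rw [Int.gcd_mul_left]
      simp only [Int.natAbs_natCast]
      push_cast
      rw [Int.gcd_mul_left]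
      simp only [Int.natAbs_natCast]
    have h1' : g * 1 = g * Int.gcd (Int.gcd a b) c := by rw [Nat.mul_one]; exact hgg
    have := Nat.eq_of_mul_eq_mul_left hgpos h1'
    omega
  -- key equation : g² (a²+b²+c²) = 3 t²
  have key : (g : ℤ) ^ 2 * (a ^ 2 + b ^ 2 + c ^ 2) = 3 * t ^ 2 := by
    rw [← lagrange, ha, hb, hc]; ring
  -- g ∣ 3t
  have hdvd3t : (g : ℤ) ∣ 3 * t := by
    rw [← Int.pow_dvd_pow_iff (n := 2) (by norm_num)]
    exact ⟨3 * (a ^ 2 + b ^ 2 + c ^ 2), by linear_combination -3 * key⟩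
  obtain ⟨e, he⟩ := hdvd3t
  have he2 : 3 * (a ^ 2 + b ^ 2 + c ^ 2) = e ^ 2 := by
    have h9 : (g:ℤ) ^ 2 * (3 * (a ^ 2 + b ^ 2 + c ^ 2)) = (g:ℤ) ^ 2 * e ^ 2 := by
      linear_combination 3 * key + (3 * t + (g:ℤ) * e) * he
    exact mul_left_cancel₀ (pow_ne_zero 2 hgne) h9
  have h3e : (3 : ℤ) ∣ e := by
    have hp : Prime (3 : ℤ) := Int.prime_three
    have : (3 : ℤ) ∣ e * e := ⟨a ^ 2 + b ^ 2 + c ^ 2, by linear_combination -he2 + sq e⟩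
    rcases hp.dvd_mul.mp this with h | h <;> exact h
  obtain ⟨d0, hd0⟩ := h3e
  have hsum : a ^ 2 + b ^ 2 + c ^ 2 = 3 * d0 ^ 2 := by
    have : 3 * (a ^ 2 + b ^ 2 + c ^ 2) = 3 * (3 * d0 ^ 2) := by
      rw [he2, hd0]; ring
    exact mul_left_cancel₀ (by norm_num : (3:ℤ) ≠ 0) this
  have hsumpos : 0 < a ^ 2 + b ^ 2 + c ^ 2 := by
    have hnn : (0:ℤ) ≤ a ^ 2 + b ^ 2 + c ^ 2 := by positivity
    have hne : a ^ 2 + b ^ 2 + c ^ 2 ≠ 0 := by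
      intro h0
      rw [h0, mul_zero] at key
      have hpos : (0:ℤ) < 3 * t ^ 2 := by positivity
      omega
    omega
  have hd0ne : d0 ≠ 0 := by intro h0; rw [h0] at hsum; simp at hsum; omega
  refine ⟨a, b, c, |d0|, ?_, ?_, hgcd1, ?_, ?_⟩
  · rcases abs_pos.mpr hd0ne with h; omega
  · -- |d0| odd
    rw [← Int.not_even_iff_odd]
    intro heven
    have heven' : Even d0 := by
      rcases abs_choice d0 with h | h
      · rwa [h] at heven
      · rw [h] at heven; exact even_neg.mp heven
    obtain ⟨m, hm⟩ := heven'
    have hmod : ((a : ZMod 4)) ^ 2 + (b : ZMod 4) ^ 2 + (c : ZMod 4) ^ 2 = 0 := by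
      calc (a : ZMod 4) ^ 2 + (b : ZMod 4) ^ 2 + (c : ZMod 4) ^ 2
          = ((a ^ 2 + b ^ 2 + c ^ 2 : ℤ) : ZMod 4) := by push_cast; ring
        _ = ((3 * (m + m) ^ 2 : ℤ) : ZMod 4) := by rw [hsum, hm]
        _ = 12 * (m : ZMod 4) ^ 2 := by push_cast; ring
        _ = 0 := by rw [show (12 : ZMod 4) = 0 by decide]; ring
    obtain ⟨hma, hmb, hmc⟩ := mod4_lemma _ _ _ hmod
    have h2a := two_dvd_of_mod4 a hma
    have h2b := two_dvd_of_mod4 b hmb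
    have h2c := two_dvd_of_mod4 c hmc
    have : (2 : ℤ) ∣ (Int.gcd (Int.gcd a b) c : ℤ) :=
      Int.dvd_coe_gcd (Int.dvd_coe_gcd h2a h2b) h2c
    rw [hgcd1] at this
    norm_num at this
  · rw [hsum]; rw [sq_abs]
  · -- orthogonality
    have du : a * u0 + b * u1 + c * u2 = 0 := by
      have : (g : ℤ) * (a * u0 + b * u1 + c * u2) = 0 := by
        rw [← orthu', ha, hb, hc]; ring
      exact (mul_eq_zero.mp this).resolve_left hgne
    have dv : a * v0 + b * v1 + c * v2 = 0 := by
      have : (g : ℤ) * (a * v0 + b * v1 + c * v2) = 0 := by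
        rw [← orthv', ha, hb, hc]; ring
      exact (mul_eq_zero.mp this).resolve_left hgne
    rw [hu0, hu1, hu2] at du
    rw [hv0, hv1, hv2] at dv
    intro x hx y hy
    simp only [Set.mem_insert_iff, Set.mem_singleton_iff] at hx hy
    rcases hx with rfl | rfl | rfl <;> rcases hy with rfl | rfl | rfl <;>
      simp only [dot3_vec, Pi.sub_apply] <;>
      first
        | ring1
        | linear_combination du
        | linear_combination -du
        | linear_combination dv
        | linear_combination -dv
        | linear_combination du - dv
        | linear_combination dv - du
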